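/- Existence of an optimal fixed point: given x_opt ∈ ℝ with Σᵢ ∇fᵢ(x_opt) = 0, define x⋆ = 𝟙x_opt, u⋆ with uᵢ⋆ = ∇fᵢ(x_opt), v⋆ = −(α/ζ)u⋆, w₁⋆ = x⋆ + v⋆. If L is a weight-balanced Laplacian of a strongly connected graph (so 𝟙ᵀu⋆ = 0 implies u⋆ ∈ range(L)) and ζη ≠ 0, then there exists ŵ₂⋆ in the row space of L with ζηLŵ₂⋆ = −α(I − δL)u⋆, and setting ŷ⋆ = δw₁⋆ + ηŵ₂⋆ yields a fixed point of G_m. -/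

import Mathlib

open Matrix

/-- Existence of an optimal fixed point of `G_m`: given `x_opt` with `Σᵢ ∇fᵢ(x_opt) = 0`,
and `L` a weight-balanced Laplacian of a strongly connected graph
(kernels of `L` and `Lᵀ` spanned by `𝟙`), with `ζη ≠ 0`, there exists `ŵ₂⋆` in the
row space of `L` (orthogonal to `𝟙`) solving `ζηLŵ₂⋆ = −α(I − δL)u⋆`, and the
resulting tuple is a fixed point of `G_m`. -/
theorem aux_surj (n : ℕ) (hn : 1 ≤ n) (L : Matrix (Fin n) (Fin n) ℝ)
    (hL1 : L.mulVec 1 = 0) (hL2 : Matrix.vecMul 1 L = 0)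
    (hker : ∀ w : Fin n → ℝ, L.mulVec w = 0 → ∃ c : ℝ, w = c • (1 : Fin n → ℝ))
    (b : Fin n → ℝ) (hb : ∑ i, b i = 0) : ∃ z, L.mulVec z = b := by
  have hnn : (n : ℝ) ≠ 0 := Nat.cast_ne_zero.mpr (by omega)
  have hone : (1 : Fin n → ℝ) ≠ 0 := by
    intro h
    have := congrFun h ⟨0, hn⟩
    simp at this
  let φ : (Fin n → ℝ) →ₗ[ℝ] ℝ :=
    { toFun := fun w => ∑ i, w i,
      map_add' := by intro x y; simp [Finset.sum_add_distrib],
      map_smul' := by intro c x; simp [Finset.mul_sum] }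
  have hkerT : LinearMap.ker L.mulVecLin = Submodule.span ℝ {(1 : Fin n → ℝ)} := by
    apply le_antisymm
    · intro w hw
      obtain ⟨c, hc⟩ := hker w (by simpa using hw)
      rw [hc]
      exact Submodule.smul_mem _ _ (Submodule.mem_span_singleton_self _)
    · rw [Submodule.span_le]
      intro w hw
      simp only [Set.mem_singleton_iff] at hw
      subst hw
      simp only [SetLike.mem_coe, LinearMap.mem_ker, Matrix.mulVecLin_apply]
      exact hL1
  have h1 : Module.finrank ℝ (LinearMap.ker L.mulVecLin) = 1 := by
    rw [hkerT, finrank_span_singleton hone]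
  have hrn : Module.finrank ℝ (LinearMap.range L.mulVecLin) + 1 = n := by
    have h := LinearMap.finrank_range_add_finrank_ker L.mulVecLin
    rw [h1] at h
    simpa using h
  have hφsurj : Function.Surjective φ := by
    intro r
    refine ⟨(r / n) • 1, ?_⟩
    show ∑ _i : Fin n, (r / n) * 1 = r
    rw [Finset.sum_const]
    simp
    field_simp
  have hkφ : Module.finrank ℝ (LinearMap.ker φ) + 1 = n := by
    have h := LinearMap.finrank_range_add_finrank_ker φ
    rw [LinearMap.range_eq_top.mpr hφsurj] at h
    simp [finrank_top] at h
    omega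
  have hle : LinearMap.range L.mulVecLin ≤ LinearMap.ker φ := by
    rintro w ⟨z, rfl⟩
    simp only [LinearMap.mem_ker]
    show ∑ i, L.mulVec z i = 0
    have h1 : ∑ i, (L.mulVec z) i = dotProduct 1 (L.mulVec z) := by
      simp [dotProduct]
    rw [h1, Matrix.dotProduct_mulVec, hL2]
    simp
  have heq : LinearMap.range L.mulVecLin = LinearMap.ker φ :=
    Submodule.eq_of_le_of_finrank_le hle (by omega)
  have hbmem : b ∈ LinearMap.range L.mulVecLin := by
    rw [heq]
    exact hb
  obtain ⟨z, hz⟩ := hbmem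
  exact ⟨z, hz⟩

theorem stmt11 (n : ℕ) (hn : 1 ≤ n)
    (f g : Fin n → ℝ → ℝ) (hderiv : ∀ i x, HasDerivAt (f i) (g i x) x)
    (xopt : ℝ) (hopt : ∑ i, g i xopt = 0)
    (L Pi : Matrix (Fin n) (Fin n) ℝ)
    (hPi : Pi = Matrix.of fun _ _ => (n : ℝ)⁻¹)
    (hL1 : L.mulVec 1 = 0) (hL2 : Matrix.vecMul 1 L = 0)
    (hker : ∀ w : Fin n → ℝ, L.mulVec w = 0 → ∃ c : ℝ, w = c • (1 : Fin n → ℝ))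
    (hkerT : ∀ w : Fin n → ℝ, Matrix.vecMul w L = 0 → ∃ c : ℝ, w = c • (1 : Fin n → ℝ))
    (α ζ η δ : ℝ) (hζη : ζ * η ≠ 0) :
    let xs : Fin n → ℝ := fun _ => xopt
    let us : Fin n → ℝ := fun i => g i xopt
    let vs : Fin n → ℝ := (-(α/ζ)) • us
    let w1s : Fin n → ℝ := xs + vs
    ∃ w2s : Fin n → ℝ,
      (∑ i, w2s i = 0) ∧
      (ζ*η) • L.mulVec w2s = (-α) • ((1 - δ • L).mulVec us) ∧
      (0 : Fin n → ℝ) = -(α • us) - ζ • vs ∧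
      w2s = (1 - Pi).mulVec (w1s + w2s - vs) ∧
      xs = w1s - vs ∧
      vs = L.mulVec (δ • w1s + η • w2s) := by
  intro xs us vs w1s
  have hζ : ζ ≠ 0 := left_ne_zero_of_mul hζη
  have hη : η ≠ 0 := right_ne_zero_of_mul hζη
  have hnn : (n : ℝ) ≠ 0 := Nat.cast_ne_zero.mpr (by omega)
  -- the right-hand side vector
  set b : Fin n → ℝ := (-α) • ((1 - δ • L).mulVec us) with hbdef
  have hLusum : ∑ i, (L.mulVec us) i = 0 := by
    have h1 : ∑ i, (L.mulVec us) i = dotProduct 1 (L.mulVec us) := by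
      simp [dotProduct]
    rw [h1, Matrix.dotProduct_mulVec, hL2]
    simp
  have hbeval : b = (-α) • us + (α * δ) • (L.mulVec us) := by
    rw [hbdef, Matrix.sub_mulVec, Matrix.one_mulVec, Matrix.smul_mulVec]
    funext i
    simp [smul_sub]
    ring
  have hbsum : ∑ i, b i = 0 := by
    rw [hbeval]
    have hsplit : ∑ i, ((-α) • us + (α*δ) • (L.mulVec us)) i
        = ∑ i, (((-α) • us) i + (((α*δ) • (L.mulVec us)) i)) := rfl
    rw [hsplit, Finset.sum_add_distrib]
    have h1 : ∑ i, ((-α) • us) i = -α * ∑ i, us i := by simp [Finset.mul_sum]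
    have h2 : ∑ i, (((α*δ) • (L.mulVec us)) i) = (α*δ) * ∑ i, (L.mulVec us) i := by
      simp [Finset.mul_sum]
    have h3 : ∑ i, us i = 0 := hopt
    rw [h1, h2, h3, hLusum]
    ring
  have hb2sum : ∑ i, ((ζ * η)⁻¹ • b) i = 0 := by
    simp [← Finset.mul_sum, hbsum]
  obtain ⟨z, hz⟩ := aux_surj n hn L hL1 hL2 hker ((ζ * η)⁻¹ • b) hb2sum
  set m : ℝ := (∑ i, z i) / n with hm
  refine ⟨z - m • 1, ?_, ?_, ?_, ?_, ?_, ?_⟩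
  · -- sum zero
    simp [Finset.sum_sub_distrib, hm, Finset.sum_const]
    field_simp
    ring
  · -- main linear equation
    have hLw2 : L.mulVec (z - m • 1) = (ζ * η)⁻¹ • b := by
      rw [Matrix.mulVec_sub, Matrix.mulVec_smul, hL1, hz]
      simp
    rw [hLw2, smul_smul, mul_inv_cancel₀ hζη, one_smul]
  · -- 0 = -(α•us) - ζ•vs
    funext i
    show (0:ℝ) = -(α * us i) - ζ * (-(α/ζ) * us i)
    field_simp
    ring
  · -- projection equation
    have hsum : ∑ j, (w1s + (z - m • 1) + -vs) j = n * xopt := by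
      have h1 : ∀ j, (w1s + (z - m • 1) + -vs) j = xopt + (z j - m) := by
        intro j
        show xs j + vs j + (z j - m * 1) + -(vs j) = xopt + (z j - m)
        simp [xs]
        ring
      rw [Finset.sum_congr rfl (fun j _ => h1 j)]
      rw [Finset.sum_add_distrib, Finset.sum_sub_distrib, Finset.sum_const]
      simp [hm]
      field_simp
      ring
    funext i
    rw [sub_eq_add_neg, Matrix.sub_mulVec, Matrix.one_mulVec]
    show z i - m * 1 = (w1s + (z - m • 1) + -vs) i - Pi.mulVec (w1s + (z - m • 1) + -vs) i
    have hPiv : Pi.mulVec (w1s + (z - m • 1) + -vs) i = (n:ℝ)⁻¹ * ∑ j, (w1s + (z - m • 1) + -vs) j := by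
      simp [hPi, Matrix.mulVec, dotProduct, Finset.mul_sum]
    rw [hPiv, hsum]
    show z i - m * 1 = (xs i + vs i + (z i - m * 1) + -(vs i)) - (n:ℝ)⁻¹ * (n * xopt)
    show z i - m * 1 = (xopt + vs i + (z i - m * 1) + -(vs i)) - (n:ℝ)⁻¹ * (n * xopt)
    field_simp
    ring
  · -- xs = w1s - vs
    funext i
    show xs i = xs i + vs i - vs i
    ring
  · -- vs = L (δ w1s + η w2s)
    have hLxs : L.mulVec xs = 0 := by
      have : xs = xopt • (1 : Fin n → ℝ) := by funext i; simp [xs]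
      rw [this, Matrix.mulVec_smul, hL1, smul_zero]
    have hLw1 : L.mulVec w1s = (-(α/ζ)) • L.mulVec us := by
      show L.mulVec (xs + vs) = _
      rw [Matrix.mulVec_add, hLxs, zero_add]
      show L.mulVec ((-(α/ζ)) • us) = _
      rw [Matrix.mulVec_smul]
    have hLw2 : L.mulVec (z - m • 1) = (ζ * η)⁻¹ • b := by
      rw [Matrix.mulVec_sub, Matrix.mulVec_smul, hL1, hz]
      simp
    rw [Matrix.mulVec_add, Matrix.mulVec_smul, Matrix.mulVec_smul, hLw1, hLw2, hbeval]
    funext i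
    show -(α/ζ) * us i = δ * (-(α/ζ) * (L.mulVec us) i)
      + η * ((ζ*η)⁻¹ * ((-α) * us i + (α * δ) * (L.mulVec us) i))
    field_simp
    ring
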